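/- Let r < v_h be reals, n ≥ 2 an integer, l ∈ ℝ, and let F: ℝ → ℝ be differentiable with continuous derivative f and F(u) > 0 for u ∈ (r, v_h]. Define T(v) = F(v)^{−(n+l−1)} · ∫_r^v (n−1)·u·F(u)^{n−2+l}·f(u) du for v ∈ (r, v_h]. Then T is differentiable on (r, v_h) and satisfies (n−1)·v·F(v)^{n−2}·f(v) = (n−1+l)·T(v)·f(v)·F(v)^{n−2} + T'(v)·F(v)^{n−1} for all v ∈ (r, v_h). -/
import Mathlib


open MeasureTheory intervalIntegral

/-- Incentive compatibility of the bidding ring `(T, g)` with `l = (n−1)·g`: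
the transfer `T(v) = F(v)^{−(n+l−1)} ∫_r^v (n−1)·u·F(u)^{n−2+l}·f(u) du`
is differentiable on `(r, v_h)` and satisfies the first-order condition
`(n−1)·v·F(v)^{n−2}·f(v) = (n−1+l)·T(v)·f(v)·F(v)^{n−2} + T'(v)·F(v)^{n−1}`. -/
theorem stmt_11 (r vh l : ℝ) (n : ℕ) (hn : 2 ≤ n) (hrv : r < vh)
    (F f : ℝ → ℝ) (hF : ∀ u, HasDerivAt F (f u) u) (hf : Continuous f)
    (hFpos : ∀ u, r < u → u ≤ vh → 0 < F u)
    (hInt : IntervalIntegrable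
      (fun u => ((n : ℝ) - 1) * u * F u ^ ((n : ℝ) - 2 + l) * f u) volume r vh) :
    ∀ v ∈ Set.Ioo r vh,
      DifferentiableAt ℝ
        (fun w => F w ^ (-((n : ℝ) + l - 1)) *
          ∫ u in r..w, ((n : ℝ) - 1) * u * F u ^ ((n : ℝ) - 2 + l) * f u) v ∧
      ((n : ℝ) - 1) * v * F v ^ ((n : ℝ) - 2) * f v
        = ((n : ℝ) - 1 + l) *
            (F v ^ (-((n : ℝ) + l - 1)) *
              ∫ u in r..v, ((n : ℝ) - 1) * u * F u ^ ((n : ℝ) - 2 + l) * f u) *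
            f v * F v ^ ((n : ℝ) - 2) +
          (deriv (fun w => F w ^ (-((n : ℝ) + l - 1)) *
              ∫ u in r..w, ((n : ℝ) - 1) * u * F u ^ ((n : ℝ) - 2 + l) * f u) v) *
            F v ^ ((n : ℝ) - 1) := by
  intro v hv
  obtain ⟨hrv', hvvh⟩ := hv
  have hFv : 0 < F v := hFpos v hrv' hvvh.le
  set c : ℝ := -((n : ℝ) + l - 1) with hc
  set I : ℝ → ℝ := fun u => ((n : ℝ) - 1) * u * F u ^ ((n : ℝ) - 2 + l) * f u with hIdef
  have hFcont : Continuous F := by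
    have hD : Differentiable ℝ F := fun u => (hF u).differentiableAt
    exact hD.continuous
  have hImeas : Measurable I := by fun_prop
  have hIcont : ContinuousAt I v := by
    apply ContinuousAt.mul _ hf.continuousAt
    apply ContinuousAt.mul
    · exact (continuous_const.mul continuous_id).continuousAt
    · exact hFcont.continuousAt.rpow_const (Or.inl hFv.ne')
  have hint : IntervalIntegrable I volume r v :=
    hInt.mono_set (by
      rw [Set.uIcc_of_le hrv'.le, Set.uIcc_of_le hrv.le]
      exact Set.Icc_subset_Icc le_rfl hvvh.le)
  have hG : HasDerivAt (fun w => ∫ u in r..w, I u) (I v) v :=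
    intervalIntegral.integral_hasDerivAt_right hint
      ⟨Set.univ, Filter.univ_mem, hImeas.aestronglyMeasurable⟩ hIcont
  have hP : HasDerivAt (fun w => F w ^ c) (f v * c * F v ^ (c - 1)) v :=
    (hF v).rpow_const (Or.inl hFv.ne')
  have hT : HasDerivAt (fun w => F w ^ c * ∫ u in r..w, I u)
      (f v * c * F v ^ (c - 1) * (∫ u in r..v, I u) + F v ^ c * I v) v := hP.mul hG
  refine ⟨hT.differentiableAt, ?_⟩
  rw [hT.deriv]
  have key : ∀ a b : ℝ, F v ^ a * F v ^ b = F v ^ (a + b) :=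
    fun a b => (Real.rpow_add hFv a b).symm
  have e1 : F v ^ c * F v ^ ((n : ℝ) - 2) = F v ^ (c + ((n : ℝ) - 2)) := key _ _
  have e2 : F v ^ (c - 1) * F v ^ ((n : ℝ) - 1) = F v ^ (c + ((n : ℝ) - 2)) := by
    rw [key]; congr 1; ring
  have e3 : F v ^ c * F v ^ ((n : ℝ) - 2 + l) * F v ^ ((n : ℝ) - 1)
      = F v ^ ((n : ℝ) - 2) := by
    rw [key, key]; congr 1; rw [hc]; ring
  simp only [hIdef]
  set G := ∫ u in r..v, ((n : ℝ) - 1) * u * F u ^ ((n : ℝ) - 2 + l) * f u with hG2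
  have hcl : c = -((n : ℝ) + l - 1) := hc
  linear_combination (-(((n:ℝ)-1+l)*f v*G))*e1 + (-(c*f v*G))*e2 + (-(((n:ℝ)-1)*v*f v))*e3 +
    (-(f v*G*F v^(c+((n:ℝ)-2))))*hcl
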